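/- Given a monotone linkage function π (i.e., π(x,S) ≥ π(x,T) whenever S ⊆ T and x ∉ T), the set function M_π(T) = min_{x ∈ X \ T} π(x, T), defined on proper nonempty subsets T of the finite ground set X, is quasi-concave: for proper nonempty subsets S, T with S ∩ T nonempty and S ∪ T ≠ X, M_π(S ∩ T) ≥ min(M_π(S), M_π(T)). -/
import Mathlib


open Finset

/-- `M_π T = min_{x ∉ T} π x T`. -/
noncomputable def Mpi {α : Type*} (π : α → Finset α → ℝ) (T : Finset α) : ℝ :=
  sInf ((fun x => π x T) '' {x | x ∉ T})

lemma Mpi_le {α : Type*} [Fintype α] (π : α → Finset α → ℝ) (T : Finset α)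
    {x : α} (hx : x ∉ T) : Mpi π T ≤ π x T := by
  apply csInf_le
  · exact (Set.Finite.image _ (Set.toFinite _)).bddBelow
  · exact ⟨x, hx, rfl⟩

theorem stmt_5 {α : Type*} [Fintype α] [DecidableEq α]
    (π : α → Finset α → ℝ)
    (hmono : ∀ (S T : Finset α) (x : α), S.Nonempty → S ⊆ T → T ⊂ Finset.univ →
      x ∉ T → π x T ≤ π x S)
    (S T : Finset α)
    (hS : S.Nonempty) (hSproper : S ⊂ Finset.univ)
    (hT : T.Nonempty) (hTproper : T ⊂ Finset.univ)
    (hST : (S ∩ T).Nonempty) (hunion : S ∪ T ≠ Finset.univ) :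
    min (Mpi π S) (Mpi π T) ≤ Mpi π (S ∩ T) := by
  apply le_csInf
  · obtain ⟨y, -, hy⟩ := Finset.exists_of_ssubset hSproper
    exact ⟨π y (S ∩ T), y, fun h => hy (Finset.mem_inter.mp h).1, rfl⟩
  · rintro b ⟨x, hx, rfl⟩
    simp only [Set.mem_setOf_eq, Finset.mem_inter, not_and_or] at hx
    rcases hx with hx | hx
    · calc min (Mpi π S) (Mpi π T) ≤ Mpi π S := min_le_left _ _
        _ ≤ π x S := Mpi_le π S hx
        _ ≤ π x (S ∩ T) := hmono (S ∩ T) S x hST Finset.inter_subset_left hSproper hx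
    · calc min (Mpi π S) (Mpi π T) ≤ Mpi π T := min_le_right _ _
        _ ≤ π x T := Mpi_le π T hx
        _ ≤ π x (S ∩ T) := hmono (S ∩ T) T x hST Finset.inter_subset_right hTproper hx
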